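/- Let H be an m×m Hadamard matrix and 1 ≤ k < √m. Write (1/√m)H = [[A,B],[C,D]] with A of size k×k. Then I - A is invertible and every entry of the orthogonal matrix M := D + C(I-A)⁻¹B satisfies |M_{ij}| ≤ 1/(√m - k). -/

import Mathlib

open Matrix

attribute [local instance] Matrix.linftyOpNormedAddCommGroup Matrix.linftyOpNormedRing

theorem stmt_15 (k l m : ℕ) (hm : m = k + l) (hk : 0 < k)
    (hksqrt : (k : ℝ) < Real.sqrt m)
    (H : Matrix (Fin k ⊕ Fin l) (Fin k ⊕ Fin l) ℝ)
    (hpm : ∀ i j, H i j = 1 ∨ H i j = -1)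
    (hHad : Hᵀ * H = (m : ℝ) • (1 : Matrix (Fin k ⊕ Fin l) (Fin k ⊕ Fin l) ℝ))
    (A : Matrix (Fin k) (Fin k) ℝ) (B : Matrix (Fin k) (Fin l) ℝ)
    (C : Matrix (Fin l) (Fin k) ℝ) (D : Matrix (Fin l) (Fin l) ℝ)
    (hA : A = ((1 : ℝ) / Real.sqrt m) • Matrix.toBlocks₁₁ H)
    (hB : B = ((1 : ℝ) / Real.sqrt m) • Matrix.toBlocks₁₂ H)
    (hC : C = ((1 : ℝ) / Real.sqrt m) • Matrix.toBlocks₂₁ H)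
    (hD : D = ((1 : ℝ) / Real.sqrt m) • Matrix.toBlocks₂₂ H) :
    IsUnit (1 - A) ∧
    ∀ i j, |(D + C * (1 - A)⁻¹ * B) i j| ≤ 1 / (Real.sqrt m - k) := by
  haveI : Nonempty (Fin k) := Fin.pos_iff_nonempty.mp hk
  set s := Real.sqrt m with hs
  have hk1 : (1 : ℝ) ≤ (k : ℝ) := by exact_mod_cast hk
  have hs0 : (0 : ℝ) < s := lt_trans (by linarith) hksqrt
  have habs : ∀ i j, |H i j| = 1 := by
    intro i j; rcases hpm i j with h | h <;> simp [h]
  have habsA : ∀ p q, |A p q| = 1 / s := by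
    intro p q
    simp only [hA, Matrix.smul_apply, Matrix.toBlocks₁₁, smul_eq_mul, of_apply]
    rw [abs_mul, habs, abs_of_pos (by positivity : (0:ℝ) < 1 / s), mul_one]
  have habsB : ∀ p q, |B p q| = 1 / s := by
    intro p q
    simp only [hB, Matrix.smul_apply, Matrix.toBlocks₁₂, smul_eq_mul, of_apply]
    rw [abs_mul, habs, abs_of_pos (by positivity : (0:ℝ) < 1 / s), mul_one]
  have habsC : ∀ p q, |C p q| = 1 / s := by
    intro p q
    simp only [hC, Matrix.smul_apply, Matrix.toBlocks₂₁, smul_eq_mul, of_apply]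
    rw [abs_mul, habs, abs_of_pos (by positivity : (0:ℝ) < 1 / s), mul_one]
  have habsD : ∀ p q, |D p q| = 1 / s := by
    intro p q
    simp only [hD, Matrix.smul_apply, Matrix.toBlocks₂₂, smul_eq_mul, of_apply]
    rw [abs_mul, habs, abs_of_pos (by positivity : (0:ℝ) < 1 / s), mul_one]
  -- norm of A
  have hnA : ‖A‖ ≤ (k : ℝ) / s := by
    rw [Matrix.linfty_opNorm_def]
    have hcoe : ∀ p : Fin k, ((∑ q, ‖A p q‖₊ : NNReal) : ℝ) = (k : ℝ) / s := by
      intro p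
      rw [NNReal.coe_sum]
      simp only [coe_nnnorm, Real.norm_eq_abs]
      rw [Finset.sum_congr rfl (fun q _ => habsA p q), Finset.sum_const, Finset.card_univ,
        Fintype.card_fin, nsmul_eq_mul, mul_one_div]
    obtain ⟨p, hp⟩ := Finset.exists_mem_eq_sup (Finset.univ : Finset (Fin k))
      Finset.univ_nonempty (fun p : Fin k => ∑ q, ‖A p q‖₊)
    rw [hp.2, hcoe]
  have hA1 : ‖A‖ < 1 := lt_of_le_of_lt hnA (by rw [div_lt_one hs0]; exact hksqrt)
  have hUnit : IsUnit (1 - A) := by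
    letI : NormedSpace ℝ (Matrix (Fin k) (Fin k) ℝ) := Matrix.linftyOpNormedSpace
    haveI : CompleteSpace (Matrix (Fin k) (Fin k) ℝ) := FiniteDimensional.complete ℝ _
    exact isUnit_one_sub_of_norm_lt_one hA1
  refine ⟨hUnit, ?_⟩
  set X := (1 - A)⁻¹ with hX
  have hXinv : X * (1 - A) = 1 :=
    Matrix.nonsing_inv_mul _ ((Matrix.isUnit_iff_isUnit_det _).mp hUnit)
  have hXeq : X = 1 + X * A := by
    have h0 := hXinv
    rw [Matrix.mul_sub, Matrix.mul_one, sub_eq_iff_eq_add] at h0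
    exact h0
  have hnX : ‖X‖ ≤ s / (s - k) := by
    have h1 : ‖X‖ ≤ 1 + ‖X‖ * ‖A‖ := by
      calc ‖X‖ = ‖(1 : Matrix (Fin k) (Fin k) ℝ) + X * A‖ := by rw [← hXeq]
        _ ≤ ‖(1 : Matrix (Fin k) (Fin k) ℝ)‖ + ‖X * A‖ := norm_add_le _ _
        _ ≤ 1 + ‖X‖ * ‖A‖ := by
            gcongr
            · exact le_of_eq norm_one
            · exact Matrix.linfty_opNorm_mul _ _
    have hks' : (0:ℝ) < s - k := by linarith
    have hXnn : (0:ℝ) ≤ ‖X‖ := norm_nonneg _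
    have h6 : ‖X‖ * (1 - (k:ℝ)/s) ≤ 1 := by
      nlinarith [mul_le_mul_of_nonneg_left hnA hXnn]
    have h7 : (0:ℝ) < 1 - (k:ℝ)/s := by
      rw [sub_pos, div_lt_one hs0]; exact hksqrt
    have h8 : ‖X‖ ≤ 1 / (1 - (k:ℝ)/s) := by
      rw [le_div_iff₀ h7]; exact h6
    have h9 : 1 - (k:ℝ)/s = (s - k)/s := by field_simp
    rw [h9, one_div_div] at h8
    exact h8
  -- row sums of X
  have hrowX : ∀ p : Fin k, ∑ q, |X p q| ≤ s / (s - k) := by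
    intro p
    have h2 : ((∑ q, ‖X p q‖₊ : NNReal) : ℝ) ≤ ‖X‖ := by
      rw [Matrix.linfty_opNorm_def]
      exact NNReal.coe_le_coe.mpr (Finset.le_sup (f := fun i : Fin k => ∑ j, ‖X i j‖₊) (Finset.mem_univ p))
    rw [NNReal.coe_sum] at h2
    simp only [coe_nnnorm, Real.norm_eq_abs] at h2
    exact h2.trans hnX
  intro i j
  have hentry : (D + C * X * B) i j = D i j + ∑ p, ∑ q, C i p * X p q * B q j := by
    simp only [Matrix.add_apply, Matrix.mul_apply, Finset.sum_mul]
    rw [Finset.sum_comm]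
  rw [hentry]
  have hbound : |∑ p, ∑ q, C i p * X p q * B q j| ≤ (k : ℝ) / s * (1 / s) * (s / (s - k)) := by
    calc |∑ p, ∑ q, C i p * X p q * B q j| ≤ ∑ p, |∑ q, C i p * X p q * B q j| :=
          Finset.abs_sum_le_sum_abs _ _
      _ ≤ ∑ p, ∑ q, |C i p * X p q * B q j| :=
          Finset.sum_le_sum fun p _ => Finset.abs_sum_le_sum_abs _ _
      _ = ∑ p : Fin k, (1 / s) * (1 / s) * ∑ q, |X p q| := by
          refine Finset.sum_congr rfl fun p _ => ?_
          rw [Finset.mul_sum]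
          refine Finset.sum_congr rfl fun q _ => ?_
          rw [abs_mul, abs_mul, habsC, habsB]
          ring
      _ ≤ ∑ p : Fin k, (1 / s) * (1 / s) * (s / (s - k)) := by
          refine Finset.sum_le_sum fun p _ => ?_
          have h4 := hrowX p
          have h3 : (0:ℝ) ≤ (1 / s) * (1 / s) := by positivity
          nlinarith
      _ = (k : ℝ) / s * (1 / s) * (s / (s - k)) := by
          rw [Finset.sum_const, Finset.card_univ, Fintype.card_fin, nsmul_eq_mul]
          ring
  have hks' : (0:ℝ) < s - k := by linarith
  calc |D i j + ∑ p, ∑ q, C i p * X p q * B q j|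
      ≤ |D i j| + |∑ p, ∑ q, C i p * X p q * B q j| := abs_add_le _ _
    _ ≤ 1 / s + (k : ℝ) / s * (1 / s) * (s / (s - k)) := by
        rw [habsD]; linarith
    _ = 1 / (s - k) := by field_simp; ring
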